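/- arXiv:math/0506274 — 2 statements merged into one kernel-verified Lean document; each statement's English description precedes it below -/
import Mathlib

section
/- For any non-negative integers a, b and any x, the double sum ∑_{m≥0} ∑_{k≥0} h_{m-2k}({1}^{k+a},{q}^{k+b}) x^k z^m equals 1/((1-z)^{a-1}(1-qz)^{b-1}) · 1/((1-z)(1-qz) - x z²) as formal power series in z. -/
/-- `hh q r s n` is the complete homogeneous symmetric function `h_n({1}^r, {q}^s)`,
i.e. the coefficient of `z^n` in `1/((1-z)^r (1-qz)^s)`. -/
noncomputable def hh {K : Type*} [CommSemiring K] (q : K) (r s : ℕ) (n : ℕ) : K :=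
  PowerSeries.coeff (R := K) n
    ((PowerSeries.mk fun _ => (1 : K)) ^ r * (PowerSeries.mk fun k => q ^ k) ^ s)

namespace DoubleSumAux

open PowerSeries Finset

variable {K : Type*} [CommRing K]

/-- `1/(1-z)`. -/
noncomputable def G (K : Type*) [CommRing K] : K⟦X⟧ := PowerSeries.mk fun _ => (1 : K)

/-- `1/(1-qz)`. -/
noncomputable def H (q : K) : K⟦X⟧ := PowerSeries.mk fun k => q ^ k

/-- The double sum generating function. -/
noncomputable def F (q x : K) (a b : ℕ) : K⟦X⟧ :=
  PowerSeries.mk fun m => ∑ k ∈ range (m / 2 + 1), x ^ k * hh q (k + a) (k + b) (m - 2 * k)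

lemma hG : ((1 : K⟦X⟧) - X) * G K = 1 := by
  rw [sub_mul, one_mul]
  ext n
  cases n with
  | zero => simp [G]
  | succ n => simp [G, coeff_succ_X_mul]

lemma hH (q : K) : ((1 : K⟦X⟧) - C (R := K) q * X) * H q = 1 := by
  rw [sub_mul, one_mul, mul_assoc]
  ext n
  cases n with
  | zero => simp [H]
  | succ n => simp [H, coeff_C_mul, coeff_succ_X_mul, pow_succ, mul_comm]

lemma hh_eq (q : K) (r s n : ℕ) : hh q r s n = coeff (R := K) n (G K ^ r * H q ^ s) := rfl

lemma key_R (q x : K) (a b : ℕ) :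
    F q x a b = G K ^ a * H q ^ b + C (R := K) x * X ^ 2 * F q x (a + 1) (b + 1) := by
  ext m
  have h2 : C (R := K) x * X ^ 2 * F q x (a + 1) (b + 1)
      = F q x (a + 1) (b + 1) * X ^ 2 * C (R := K) x := by ring
  rw [map_add, h2, coeff_mul_C, coeff_mul_X_pow']
  rw [F, coeff_mk, Finset.sum_range_succ']
  simp only [pow_zero, one_mul, zero_add, Nat.sub_zero, Nat.mul_zero]
  rw [← hh_eq]
  rw [add_comm]
  congr 1
  split_ifs with h
  · have hdiv : (m - 2) / 2 + 1 = m / 2 := by omega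
    rw [F, coeff_mk, hdiv, Finset.sum_mul]
    refine Finset.sum_congr rfl fun k _ => ?_
    have e1 : k + 1 + a = k + (a + 1) := by omega
    have e2 : k + 1 + b = k + (b + 1) := by omega
    have e3 : m - 2 * (k + 1) = m - 2 - 2 * k := by omega
    rw [e1, e2, e3, pow_succ]
    ring
  · have hm : m / 2 = 0 := by omega
    rw [hm]
    simp

lemma key_S_coeff (q x : K) :
    ∀ n a b, coeff (R := K) n (F q x (a + 1) (b + 1) * ((1 - X) * (1 - C (R := K) q * X)))
      = coeff (R := K) n (F q x a b) := by
  intro n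
  induction n using Nat.strong_induction_on with
  | _ n ih =>
    intro a b
    rw [key_R q x (a + 1) (b + 1), key_R q x a b, add_mul, map_add, map_add]
    congr 1
    · congr 1
      have h : G K ^ (a + 1) * H q ^ (b + 1) * ((1 - X) * (1 - C (R := K) q * X))
          = G K ^ a * H q ^ b * ((((1 : K⟦X⟧) - X) * G K) * (((1 : K⟦X⟧) - C (R := K) q * X) * H q)) := by
        ring
      rw [h, hG, hH]
      ring
    · have h1 : C (R := K) x * X ^ 2 * F q x (a + 1 + 1) (b + 1 + 1) * ((1 - X) * (1 - C (R := K) q * X))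
          = (F q x (a + 1 + 1) (b + 1 + 1) * ((1 - X) * (1 - C (R := K) q * X))) * X ^ 2 * C (R := K) x := by
        ring
      have h2 : C (R := K) x * X ^ 2 * F q x (a + 1) (b + 1)
          = F q x (a + 1) (b + 1) * X ^ 2 * C (R := K) x := by ring
      rw [h1, h2, coeff_mul_C, coeff_mul_C, coeff_mul_X_pow', coeff_mul_X_pow']
      split_ifs with h
      · rw [ih (n - 2) (by omega) (a + 1) (b + 1)]
      · rfl

lemma key_S (q x : K) (a b : ℕ) :
    F q x (a + 1) (b + 1) * ((1 - X) * (1 - C (R := K) q * X)) = F q x a b := by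
  ext n
  exact key_S_coeff q x n a b

lemma key_main (q x : K) (a b : ℕ) :
    F q x a b * ((1 - X) * (1 - C (R := K) q * X) - C (R := K) x * X ^ 2)
      = G K ^ a * H q ^ b * ((1 - X) * (1 - C (R := K) q * X)) := by
  calc F q x a b * ((1 - X) * (1 - C (R := K) q * X) - C (R := K) x * X ^ 2)
      = (G K ^ a * H q ^ b + C (R := K) x * X ^ 2 * F q x (a + 1) (b + 1))
          * ((1 - X) * (1 - C (R := K) q * X)) - F q x a b * (C (R := K) x * X ^ 2) := by
        rw [← key_R]; ring
    _ = G K ^ a * H q ^ b * ((1 - X) * (1 - C (R := K) q * X))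
          + C (R := K) x * X ^ 2 * (F q x (a + 1) (b + 1) * ((1 - X) * (1 - C (R := K) q * X)))
          - F q x a b * (C (R := K) x * X ^ 2) := by ring
    _ = G K ^ a * H q ^ b * ((1 - X) * (1 - C (R := K) q * X)) := by
        rw [key_S]; ring

end DoubleSumAux

/-- `∑_{m≥0} ∑_{k≥0} h_{m-2k}({1}^{k+a},{q}^{k+b}) x^k z^m
  = (1-z)^{1-a} (1-qz)^{1-b} / ((1-z)(1-qz) - x z²)`,
stated with denominators cleared (multiplying both sides by
`(1-z)^a (1-qz)^b ((1-z)(1-qz) - x z²)`). Terms with `m - 2k < 0` vanish, so the inner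
sum is over `0 ≤ k ≤ ⌊m/2⌋`. -/
theorem double_sum_hh_identity {K : Type*} [CommRing K] (q x : K) (a b : ℕ) :
    (PowerSeries.mk fun m =>
        ∑ k ∈ Finset.range (m / 2 + 1), x ^ k * hh q (k + a) (k + b) (m - 2 * k)) *
      ((1 - PowerSeries.X) ^ a * (1 - PowerSeries.C (R := K) q * PowerSeries.X) ^ b *
        ((1 - PowerSeries.X) * (1 - PowerSeries.C (R := K) q * PowerSeries.X) -
          PowerSeries.C (R := K) x * PowerSeries.X ^ 2)) =
    (1 - PowerSeries.X) * (1 - PowerSeries.C (R := K) q * PowerSeries.X) := by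
  open DoubleSumAux PowerSeries in
  show F q x a b *
      ((1 - X) ^ a * (1 - C (R := K) q * X) ^ b *
        ((1 - X) * (1 - C (R := K) q * X) - C (R := K) x * X ^ 2)) = _
  have h : F q x a b *
      ((1 - X) ^ a * (1 - C (R := K) q * X) ^ b *
        ((1 - X) * (1 - C (R := K) q * X) - C (R := K) x * X ^ 2))
      = (F q x a b * ((1 - X) * (1 - C (R := K) q * X) - C (R := K) x * X ^ 2))
          * ((1 - X) ^ a * (1 - C (R := K) q * X) ^ b) := by ring
  rw [h, key_main]
  have h2 : G K ^ a * H q ^ b * ((1 - X) * (1 - C (R := K) q * X))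
        * ((1 - X) ^ a * (1 - C (R := K) q * X) ^ b)
      = (((1 : K⟦X⟧) - X) * G K) ^ a * (((1 : K⟦X⟧) - C (R := K) q * X) * H q) ^ b
          * ((1 - X) * (1 - C (R := K) q * X)) := by
    rw [mul_pow, mul_pow]; ring
  rw [h2, hG, hH]
  simp
end

section
/- For non-negative integers a=b=1, positive integer l, the formal power series identity ∑_{m≥0} ∑_{k≥0} h_{m-2k}({1}^{k+1},{q}^{k+1}) (q^l/[l]²)^k z^m = ([l]²/[2l]) ( [l+1]/([l]-[l+1]z) - q[l-1]/([l]-q[l-1]z) ) holds over ℚ(q). -/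
/-- The q-integer `[n] = (1-q^n)/(1-q)`. -/
noncomputable def qint {K : Type*} [Field K] (q : K) (n : ℕ) : K := (1 - q ^ n) / (1 - q)

open PowerSeries Finset

section aux
variable {K : Type*} [Field K] (q t : K)

lemma geom_aux (c : K) : (PowerSeries.mk fun k => c ^ k) * (1 - PowerSeries.C (R := K) c * X) = 1 := by
  ext n
  cases n with
  | zero => simp
  | succ n =>
    have h : (PowerSeries.mk fun k => c ^ k) * (1 - PowerSeries.C (R := K) c * X) =
        PowerSeries.mk (fun k => c ^ k) -
        (PowerSeries.C (R := K) c * PowerSeries.mk fun k => c ^ k) * X := by ring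
    rw [h, map_sub, coeff_succ_mul_X, coeff_mk, coeff_C_mul, coeff_mk]
    simp [pow_succ, mul_comm]

/-- truncation: coeff m of a product depends only on coeffs ≤ m -/
lemma coeff_mul_congr {a a' b : PowerSeries K} (m : ℕ)
    (h : ∀ j ≤ m, PowerSeries.coeff (R := K) j a = PowerSeries.coeff (R := K) j a') :
    PowerSeries.coeff (R := K) m (a * b) = PowerSeries.coeff (R := K) m (a' * b) := by
  rw [coeff_mul, coeff_mul]
  refine Finset.sum_congr rfl fun p hp => ?_
  rw [Finset.HasAntidiagonal.mem_antidiagonal] at hp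
  rw [h p.1 (Nat.le.intro hp)]

local notation "F" => (PowerSeries.mk fun _ => (1 : K)) * (PowerSeries.mk fun k => q ^ k)

lemma FG_one : (F) * ((1 - X) * (1 - PowerSeries.C (R := K) q * X)) = 1 := by
  have h1 : (PowerSeries.mk fun _ => (1 : K)) * (1 - X) = 1 := by
    have := geom_aux (1 : K)
    simpa using this
  have h2 := geom_aux q
  calc (F) * ((1 - X) * (1 - PowerSeries.C (R := K) q * X))
      = ((PowerSeries.mk fun _ => (1 : K)) * (1 - X)) *
        ((PowerSeries.mk fun k => q ^ k) * (1 - PowerSeries.C (R := K) q * X)) := by ring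
    _ = 1 := by rw [h1, h2, one_mul]

lemma coeff_term (k m : ℕ) :
    PowerSeries.coeff (R := K) m ((PowerSeries.C (R := K) t * X ^ 2 * F) ^ k * F) =
      if 2 * k ≤ m then t ^ k * hh q (k + 1) (k + 1) (m - 2 * k) else 0 := by
  have h : (PowerSeries.C (R := K) t * X ^ 2 * F) ^ k * F =
      (PowerSeries.C (R := K) (t ^ k) * (F) ^ (k + 1)) * X ^ (2 * k) := by
    rw [map_pow]
    rw [pow_mul]
    ring
  rw [h, coeff_mul_X_pow']
  split_ifs with hk
  · rw [coeff_C_mul, hh, mul_pow]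
  · rfl

/-- The key identity, for arbitrary t. -/
lemma key_identity :
    (PowerSeries.mk fun m => ∑ k ∈ Finset.range (m / 2 + 1),
        t ^ k * hh q (k + 1) (k + 1) (m - 2 * k)) *
      ((1 - X) * (1 - PowerSeries.C (R := K) q * X) - PowerSeries.C (R := K) t * X ^ 2) = 1 := by
  set x : PowerSeries K := PowerSeries.C (R := K) t * X ^ 2 * F with hx
  ext m
  have hagree : ∀ j ≤ m, PowerSeries.coeff (R := K) j
      (PowerSeries.mk fun m => ∑ k ∈ Finset.range (m / 2 + 1),
        t ^ k * hh q (k + 1) (k + 1) (m - 2 * k)) =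
      PowerSeries.coeff (R := K) j ((∑ k ∈ Finset.range (m + 1), x ^ k) * F) := by
    intro j hj
    rw [coeff_mk, Finset.sum_mul, map_sum]
    rw [Finset.sum_congr rfl fun k _ => coeff_term q t k j]
    rw [← Finset.sum_filter]
    have hfil : Finset.filter (fun k => 2 * k ≤ j) (Finset.range (m + 1)) =
        Finset.range (j / 2 + 1) := by
      ext k
      simp only [Finset.mem_filter, Finset.mem_range]
      omega
    rw [hfil]
  rw [coeff_mul_congr m hagree]
  have hFG := FG_one q (K := K)
  have hG : (1 - X) * (1 - PowerSeries.C (R := K) q * X) - PowerSeries.C (R := K) t * X ^ 2 =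
      ((1 - X) * (1 - PowerSeries.C (R := K) q * X)) * (1 - x) := by
    calc (1 - X) * (1 - PowerSeries.C (R := K) q * X) - PowerSeries.C (R := K) t * X ^ 2
        = (1 - X) * (1 - PowerSeries.C (R := K) q * X) - PowerSeries.C (R := K) t * X ^ 2 *
          (((PowerSeries.mk fun _ => (1 : K)) * (PowerSeries.mk fun k => q ^ k)) *
            ((1 - X) * (1 - PowerSeries.C (R := K) q * X))) := by rw [hFG, mul_one]
      _ = ((1 - X) * (1 - PowerSeries.C (R := K) q * X)) * (1 - x) := by rw [hx]; ring
  rw [hG]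
  have hcalc : (∑ k ∈ Finset.range (m + 1), x ^ k) * F *
      ((1 - X) * (1 - PowerSeries.C (R := K) q * X) * (1 - x)) =
      ((∑ k ∈ Finset.range (m + 1), x ^ k) * (1 - x)) *
        ((F) * ((1 - X) * (1 - PowerSeries.C (R := K) q * X))) := by ring
  rw [hcalc, FG_one, mul_one]
  have hgeo : (∑ k ∈ Finset.range (m + 1), x ^ k) * (1 - x) = 1 - x ^ (m + 1) := by
    have := geom_sum_mul x (m + 1)
    have h2 : (∑ i ∈ Finset.range (m + 1), x ^ i) * (1 - x) =
        -((∑ i ∈ Finset.range (m + 1), x ^ i) * (x - 1)) := by ring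
    rw [h2, this]; ring
  rw [hgeo, map_sub]
  have hxm : PowerSeries.coeff (R := K) m (x ^ (m + 1)) = 0 := by
    have h : x ^ (m + 1) = (PowerSeries.C (R := K) (t ^ (m + 1)) * (F) ^ (m + 1)) * X ^ (2 * (m + 1)) := by
      rw [hx, map_pow, pow_mul]; ring
    rw [h, coeff_mul_X_pow', if_neg (by omega)]
  rw [hxm, sub_zero]

end aux

/-- Lemma, case a = b = 1:
`∑_{m≥0} ∑_{k≥0} h_{m-2k}({1}^{k+1},{q}^{k+1}) (q^l/[l]²)^k z^m
  = ([l]²/[2l]) ( [l+1]/([l]-[l+1]z) - q[l-1]/([l]-q[l-1]z) )`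
as formal power series in `z`. -/
theorem hh_sum_case_a1_b1 {K : Type*} [Field K] (q : K) (hq : q ≠ 1) (l : ℕ) (hl : 1 ≤ l)
    (hql : qint q l ≠ 0) (hq2l : qint q (2 * l) ≠ 0) :
    (PowerSeries.mk fun m =>
        ∑ k ∈ Finset.range (m / 2 + 1),
          (q ^ l / (qint q l) ^ 2) ^ k * hh q (k + 1) (k + 1) (m - 2 * k)) =
      PowerSeries.C (R := K) ((qint q l) ^ 2 / qint q (2 * l)) *
        (PowerSeries.C (R := K) (qint q (l + 1)) *
            (PowerSeries.C (R := K) (qint q l) - PowerSeries.C (R := K) (qint q (l + 1)) * PowerSeries.X)⁻¹ -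
          PowerSeries.C (R := K) (q * qint q (l - 1)) *
            (PowerSeries.C (R := K) (qint q l) -
              PowerSeries.C (R := K) (q * qint q (l - 1)) * PowerSeries.X)⁻¹) := by
  obtain ⟨j, rfl⟩ : ∃ j, l = j + 1 := ⟨l - 1, (Nat.succ_pred_eq_of_pos hl).symm⟩
  have hq1 : (1 : K) - q ≠ 0 := sub_ne_zero.mpr (Ne.symm hq)
  set L : K := qint q (j + 1) with hL
  set P : K := qint q (j + 1 + 1) with hP
  set Q : K := q * qint q (j + 1 - 1) with hQ
  set t : K := q ^ (j + 1) / L ^ 2 with ht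
  have hQ' : Q = q * qint q j := by rw [hQ]; norm_num
  -- scalar identities
  have e1 : P + Q = (1 + q) * L := by
    rw [hP, hQ', hL, qint, qint, qint]
    field_simp
    ring
  have e2 : P * Q = q * L ^ 2 - q ^ (j + 1) := by
    rw [hP, hQ', hL, qint, qint, qint]
    field_simp
    ring
  have e3 : L * (P - Q) = qint q (2 * (j + 1)) := by
    rw [hP, hQ', hL, qint, qint, qint, qint]
    field_simp
    ring
  have hLt : L ^ 2 * t = q ^ (j + 1) := by
    rw [ht]; field_simp
  set A : PowerSeries K := PowerSeries.C (R := K) L - PowerSeries.C (R := K) P * X with hA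
  set B : PowerSeries K := PowerSeries.C (R := K) L - PowerSeries.C (R := K) Q * X with hB
  have hAc : PowerSeries.constantCoeff (R := K) A ≠ 0 := by
    rw [hA]; simpa using hql
  have hBc : PowerSeries.constantCoeff (R := K) B ≠ 0 := by
    rw [hB]; simpa using hql
  have hAu : A * A⁻¹ = 1 := PowerSeries.mul_inv_cancel _ hAc
  have hBu : B * B⁻¹ = 1 := PowerSeries.mul_inv_cancel _ hBc
  have hAu' : A⁻¹ * A = 1 := PowerSeries.inv_mul_cancel _ hAc
  have hBu' : B⁻¹ * B = 1 := PowerSeries.inv_mul_cancel _ hBc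
  have hAB : A * B = PowerSeries.C (R := K) (L ^ 2) *
      ((1 - X) * (1 - PowerSeries.C (R := K) q * X) - PowerSeries.C (R := K) t * X ^ 2) := by
    have lhs : A * B = PowerSeries.C (R := K) (L * L) - PowerSeries.C (R := K) (L * (P + Q)) * X +
        PowerSeries.C (R := K) (P * Q) * X ^ 2 := by
      rw [hA, hB]; simp only [map_mul, map_add]; ring
    have rhs : PowerSeries.C (R := K) (L ^ 2) *
        ((1 - X) * (1 - PowerSeries.C (R := K) q * X) - PowerSeries.C (R := K) t * X ^ 2) =
        PowerSeries.C (R := K) (L * L) - PowerSeries.C (R := K) (L * ((1 + q) * L)) * X +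
        PowerSeries.C (R := K) (q * L ^ 2 - L ^ 2 * t) * X ^ 2 := by
      simp only [map_mul, map_add, map_sub, map_one, map_pow]; ring
    rw [lhs, rhs, e1, e2, hLt]
  have key := key_identity q t (K := K)
  -- mk f * (A * B) = C (L^2)
  have key2 : (PowerSeries.mk fun m =>
      ∑ k ∈ Finset.range (m / 2 + 1),
        t ^ k * hh q (k + 1) (k + 1) (m - 2 * k)) * (A * B) = PowerSeries.C (R := K) (L ^ 2) := by
    rw [hAB, ← mul_assoc, mul_comm _ (PowerSeries.C (R := K) (L ^ 2)), mul_assoc]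
    rw [key, mul_one]
  have hmk : (PowerSeries.mk fun m =>
      ∑ k ∈ Finset.range (m / 2 + 1),
        t ^ k * hh q (k + 1) (k + 1) (m - 2 * k)) =
      PowerSeries.C (R := K) (L ^ 2) * (A⁻¹ * B⁻¹) := by
    have h1 : (PowerSeries.mk fun m =>
        ∑ k ∈ Finset.range (m / 2 + 1),
          t ^ k * hh q (k + 1) (k + 1) (m - 2 * k)) * (A * B) * (A⁻¹ * B⁻¹) =
        (PowerSeries.mk fun m =>
        ∑ k ∈ Finset.range (m / 2 + 1),
          t ^ k * hh q (k + 1) (k + 1) (m - 2 * k)) * ((A * A⁻¹) * (B * B⁻¹)) := by ring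
    rw [hAu, hBu, mul_one, mul_one] at h1
    rw [← h1, key2]
  -- RHS = C(L^2) * A⁻¹ * B⁻¹
  have hRHS : PowerSeries.C (R := K) (L ^ 2 / qint q (2 * (j + 1))) *
      (PowerSeries.C (R := K) P * A⁻¹ - PowerSeries.C (R := K) Q * B⁻¹) =
      PowerSeries.C (R := K) (L ^ 2) * (A⁻¹ * B⁻¹) := by
    have h2 : PowerSeries.C (R := K) P * A⁻¹ - PowerSeries.C (R := K) Q * B⁻¹ =
        (A⁻¹ * B⁻¹) * (PowerSeries.C (R := K) P * B - PowerSeries.C (R := K) Q * A) := by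
      have h3 : (A⁻¹ * B⁻¹) * (PowerSeries.C (R := K) P * B - PowerSeries.C (R := K) Q * A) =
          PowerSeries.C (R := K) P * A⁻¹ * (B⁻¹ * B) - PowerSeries.C (R := K) Q * B⁻¹ * (A⁻¹ * A) := by ring
      rw [h3, hAu', hBu', mul_one, mul_one]
    have h4 : PowerSeries.C (R := K) P * B - PowerSeries.C (R := K) Q * A =
        PowerSeries.C (R := K) (qint q (2 * (j + 1))) := by
      rw [← e3, hA, hB]
      simp only [map_mul, map_sub]
      ring
    rw [h2, h4]
    rw [show PowerSeries.C (R := K) (L ^ 2 / qint q (2 * (j + 1))) *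
        (A⁻¹ * B⁻¹ * PowerSeries.C (R := K) (qint q (2 * (j + 1)))) =
        PowerSeries.C (R := K) (L ^ 2 / qint q (2 * (j + 1))) * PowerSeries.C (R := K) (qint q (2 * (j + 1))) *
          (A⁻¹ * B⁻¹) from by ring, ← map_mul, div_mul_cancel₀ _ hq2l]
  rw [ht] at hmk
  rw [hmk, ← hRHS, hA, hB, hP, hQ, hL]
end
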